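/- Let x be a message and y ∈ {0,1,←}^n be the sequence of n symbols received when the sender follows the feedback protocol, and suppose at most εn of the symbols in y differ from the symbols the sender actually sent. Then last(x,y) ≥ (1−2ε)n. -/

import Mathlib

/-! Dynamic error correcting code with feedback.
Codeword symbols are `Option Bool`: `some b` is the bit `b`, `none` is the
backspace symbol `←`. -/

/-- `decode` interprets `←` (`none`) as a backspace. -/
def decode (y : List (Option Bool)) : List Bool :=
  y.foldl (fun d s => match s with | some b => d ++ [b] | none => d.dropLast) []

/-- `last(x,y)`: the length of the longest common prefix of `x` and `decode y`,
i.e. the largest `i` with `x[:i] = decode(y)[:i]`. -/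
def lastAgree (x : List Bool) (y : List (Option Bool)) : ℕ :=
  ((x.zip (decode y)).takeWhile (fun p => p.1 == p.2)).length

/-- `suff(x,y) = len(decode y) − last(x,y)`, the length of the wrong suffix. -/
def suff (x : List Bool) (y : List (Option Bool)) : ℕ :=
  (decode y).length - lastAgree x y

/-- The potential `Φ(x,y) = last(x,y) − suff(x,y)` (as an integer). -/
def Phi (x : List Bool) (y : List (Option Bool)) : ℤ :=
  (lastAgree x y : ℤ) - (suff x y : ℤ)

/-- The symbol the sender transmits next: `←` if `suff(x,y) > 0`, and otherwise
the next bit of the message, `x[last(x,y)+1]`. -/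
def nextSym (x : List Bool) (y : List (Option Bool)) : Option Bool :=
  if 0 < suff x y then none else some (x.getD (lastAgree x y) false)

/-- The next symbol is well defined: when `suff = 0` the message is not yet
exhausted. -/
def Sendable (x : List Bool) (y : List (Option Bool)) : Prop :=
  suff x y = 0 → lastAgree x y < x.length

/-! ### Auxiliary lemmas -/

/-- Longest common prefix length, recursively. -/
def lcp : List Bool → List Bool → ℕ
  | a :: x, b :: d => if a = b then lcp x d + 1 else 0
  | _, _ => 0

lemma lastAgree_eq (x : List Bool) (y : List (Option Bool)) :
    lastAgree x y = lcp x (decode y) := by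
  unfold lastAgree
  generalize decode y = d
  induction x generalizing d with
  | nil => cases d <;> simp [lcp]
  | cons a x ih =>
    cases d with
    | nil => simp [lcp]
    | cons b d =>
      simp only [List.zip_cons_cons, List.takeWhile_cons, lcp]
      by_cases h : a = b
      · simpa [h] using ih d
      · simp [h]

lemma decode_append_some (y : List (Option Bool)) (b : Bool) :
    decode (y ++ [some b]) = decode y ++ [b] := by
  simp [decode, List.foldl_append]

lemma decode_append_none (y : List (Option Bool)) :
    decode (y ++ [none]) = (decode y).dropLast := by
  simp [decode, List.foldl_append]

lemma lcp_le_right (x d : List Bool) : lcp x d ≤ d.length := by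
  induction x generalizing d with
  | nil => cases d <;> simp [lcp]
  | cons a x ih =>
    cases d with
    | nil => simp [lcp]
    | cons b d =>
      by_cases h : a = b <;> simp [lcp, h]
      exact ih d

lemma lcp_le_left (x d : List Bool) : lcp x d ≤ x.length := by
  induction x generalizing d with
  | nil => cases d <;> simp [lcp]
  | cons a x ih =>
    cases d with
    | nil => simp [lcp]
    | cons b d =>
      by_cases h : a = b <;> simp [lcp, h]
      exact ih d

lemma lcp_dropLast (x d : List Bool) :
    lcp x d.dropLast = min (lcp x d) (d.length - 1) := by
  induction x generalizing d with
  | nil => cases d <;> simp [lcp]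
  | cons a x ih =>
    cases d with
    | nil => simp [lcp]
    | cons b d =>
      cases d with
      | nil => by_cases h : a = b <;> simp [lcp, h]
      | cons c d =>
        by_cases h : a = b
        · simp only [List.dropLast_cons₂, lcp, h, if_true, ih]
          simp [List.length_cons]
        · simp [List.dropLast_cons₂, lcp, h]

lemma lcp_append_mono (x d : List Bool) (b : Bool) :
    lcp x d ≤ lcp x (d ++ [b]) := by
  induction x generalizing d with
  | nil => cases d <;> simp [lcp]
  | cons a x ih =>
    cases d with
    | nil => simp [lcp]
    | cons c d =>
      by_cases h : a = c <;> simp [lcp, h]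
      exact ih d

lemma lcp_append_hit (x d : List Bool) (b : Bool) (h : lcp x d = d.length)
    (hlt : d.length < x.length) (hb : x.getD d.length false = b) :
    lcp x (d ++ [b]) = d.length + 1 := by
  induction x generalizing d with
  | nil => simp at hlt
  | cons a x ih =>
    cases d with
    | nil =>
      simp only [List.getD, List.length_nil] at hb
      simp [lcp, List.nil_append] at hb ⊢
      simp [hb.symm]
    | cons c d =>
      by_cases hac : a = c
      · simp only [lcp, hac, if_true, List.length_cons] at h hlt ⊢
        have hb' : x.getD d.length false = b := by simpa using hb
        have hih := ih d (by omega) (by omega) hb'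
        rw [List.cons_append, lcp, if_pos rfl]
        rw [hih]
      · simp [lcp, hac] at h

lemma Phi_eq (x : List Bool) (y : List (Option Bool)) :
    Phi x y = 2 * (lcp x (decode y) : ℤ) - ((decode y).length : ℤ) := by
  have h := lcp_le_right x (decode y)
  unfold Phi suff
  rw [lastAgree_eq]
  omega

lemma phi_step_any (x : List Bool) (y : List (Option Bool)) (s : Option Bool) :
    Phi x y - 1 ≤ Phi x (y ++ [s]) := by
  rw [Phi_eq, Phi_eq]
  cases s with
  | some b =>
    rw [decode_append_some]
    have h := lcp_append_mono x (decode y) b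
    simp only [List.length_append, List.length_singleton]
    push_cast
    omega
  | none =>
    rw [decode_append_none]
    have h := lcp_dropLast x (decode y)
    have h2 := lcp_le_right x (decode y)
    rw [List.length_dropLast, h]
    push_cast
    omega

lemma phi_step_next (x : List Bool) (y : List (Option Bool))
    (hsend : Sendable x y) :
    Phi x (y ++ [nextSym x y]) = Phi x y + 1 := by
  unfold Sendable at hsend
  unfold nextSym suff at *
  rw [lastAgree_eq] at *
  have h2 := lcp_le_right x (decode y)
  by_cases hs : 0 < (decode y).length - lcp x (decode y)
  · rw [if_pos hs, Phi_eq, Phi_eq, decode_append_none]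
    have h := lcp_dropLast x (decode y)
    rw [List.length_dropLast, h]
    push_cast
    omega
  · have heq : lcp x (decode y) = (decode y).length := by omega
    have hx : lcp x (decode y) < x.length := hsend (by omega)
    rw [if_neg hs, Phi_eq, Phi_eq, decode_append_some, heq,
      lcp_append_hit x (decode y) _ heq (heq ▸ hx) rfl]
    simp only [List.length_append, List.length_singleton]
    push_cast
    omega

lemma lastAgree_ge_Phi (x : List Bool) (y : List (Option Bool)) :
    Phi x y ≤ (lastAgree x y : ℤ) := by
  unfold Phi; omega

lemma phi_ge_main (x : List Bool) (y : List (Option Bool)) (n : ℕ)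
    (hn : y.length = n)
    (hsend : ∀ i < n, Sendable x (y.take i)) :
    ∀ i ≤ n, (i : ℤ) - 2 * (((List.range i).filter
        (fun i => y.getD i none ≠ nextSym x (y.take i))).length : ℤ)
      ≤ Phi x (y.take i) := by
  intro i hi
  induction i with
  | zero => simp [Phi, suff, lastAgree, decode]
  | succ i ih =>
    have hi' : i < n := hi
    have ihh := ih (le_of_lt hi')
    have htake : y.take (i + 1) = y.take i ++ [y.getD i none] := by
      rw [List.take_succ]
      congr 1
      rw [List.getD_eq_getElem?_getD]
      cases h : y[i]? with
      | none => simp [List.getElem?_eq_none_iff] at h; omega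
      | some v => simp [h]
    have hrange : (((List.range (i + 1)).filter
          (fun j => decide (y.getD j none ≠ nextSym x (y.take j)))).length : ℤ)
        = (((List.range i).filter
          (fun j => decide (y.getD j none ≠ nextSym x (y.take j)))).length : ℤ)
          + (if y.getD i none ≠ nextSym x (y.take i) then 1 else 0) := by
      rw [List.range_succ, List.filter_append, List.length_append,
        List.filter_singleton]
      by_cases h : y.getD i none ≠ nextSym x (y.take i)
      · rw [if_pos h, decide_eq_true h, cond_true]; simp
      · rw [if_neg h, decide_eq_false h, cond_false]; simp
    rw [htake, hrange]
    by_cases h : y.getD i none ≠ nextSym x (y.take i)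
    · have hstep := phi_step_any x (y.take i) (y.getD i none)
      rw [if_pos h]
      omega
    · push_neg at h
      have hstep := phi_step_next x (y.take i) (hsend i hi')
      rw [← h] at hstep
      rw [if_neg (not_not_intro h)]
      omega

/-- If `y` is the sequence of `n` received symbols when the sender follows the
feedback protocol, and at most `εn` of them differ from the symbols the sender
actually sent, then `last(x,y) ≥ (1−2ε)n`. -/
theorem lastAgree_ge_of_few_errors (x : List Bool) (y : List (Option Bool))
    (n : ℕ) (hn : y.length = n) (ε : ℝ)
    (hsend : ∀ i < n, Sendable x (y.take i))
    (herr : (((List.range n).filter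
        (fun i => y.getD i none ≠ nextSym x (y.take i))).length : ℝ) ≤ ε * n) :
    (1 - 2 * ε) * n ≤ (lastAgree x y : ℝ) := by
  subst hn
  have hphi := phi_ge_main x y y.length rfl hsend y.length le_rfl
  rw [List.take_length] at hphi
  have hla := lastAgree_ge_Phi x y
  have h1 : (y.length : ℤ) - 2 * (((List.range y.length).filter
      (fun i => y.getD i none ≠ nextSym x (y.take i))).length : ℤ)
      ≤ (lastAgree x y : ℤ) := le_trans hphi hla
  have h2 : (y.length : ℝ) - 2 * (((List.range y.length).filter
      (fun i => y.getD i none ≠ nextSym x (y.take i))).length : ℝ)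
      ≤ (lastAgree x y : ℝ) := by exact_mod_cast h1
  nlinarith [herr, h2]
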